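/- Let D be an n×n nonnegative real demand matrix, let δ > 0 and s ≥ 1, and consider any schedule of D over s parallel switches with reconfiguration delay δ that covers D. Suppose some row or some column of D has exactly s nonzero entries, whose values listed in non-increasing order are x₁ ≥ x₂ ≥ ⋯ ≥ x_s > 0, with total weight w = x₁ + ⋯ + x_s, and with the convention x_j = 0 for j > s. Then the makespan of the schedule is at least δ + min( x₁, max(x₂, (w + δ)/s, x_s + δ), min_{2 ≤ m ≤ s²} max(x_{m+1}, (w + m·δ)/s) ), where the minimum over an empty index range (which occurs only when s = 1) is taken to be +∞. -/

import Mathlib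

open Finset

/-- A configuration of an optical switch: a permutation of the `n` ports
together with a (time) weight. -/
abbrev Config (n : ℕ) := Equiv.Perm (Fin n) × ℝ

/-- A schedule over `s` parallel switches assigns to each switch a finite
list of configurations. -/
abbrev Schedule (n s : ℕ) := Fin s → List (Config n)

/-- All configuration weights of the schedule are positive. -/
def ValidWeights {n s : ℕ} (S : Schedule n s) : Prop :=
  ∀ h : Fin s, ∀ c ∈ S h, 0 < c.2

/-- Total weight of all configurations (over all switches) servicing entry `(i, j)`,
i.e. whose permutation maps `i` to `j`. -/
def servedWeight {n s : ℕ} (S : Schedule n s) (i j : Fin n) : ℝ :=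
  ∑ h : Fin s, (((S h).filter (fun c => decide (c.1 i = j))).map Prod.snd).sum

/-- The schedule covers the demand matrix `D`. -/
def Covers {n s : ℕ} (D : Matrix (Fin n) (Fin n) ℝ) (S : Schedule n s) : Prop :=
  ∀ i j : Fin n, D i j ≤ servedWeight S i j

/-- The load of switch `h`: each configuration contributes the reconfiguration
delay `δ` plus its weight. -/
def load {n s : ℕ} (δ : ℝ) (S : Schedule n s) (h : Fin s) : ℝ :=
  ((S h).map (fun c => δ + c.2)).sum

/-- The makespan of the schedule: the maximum load over the switches. -/
noncomputable def makespan {n s : ℕ} (δ : ℝ) (S : Schedule n s) : ℝ :=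
  ⨆ h : Fin s, load δ S h


/-- The lower-bound expression `LB⁽²⁾ = δ + min(x₁, max(x₂, (w+δ)/s, x_s+δ),
min_{2 ≤ m ≤ s²} max(x_{m+1}, (w+m·δ)/s))`, valued in `WithTop ℝ` so that the
minimum over an empty index range (which occurs only when `s = 1`) is `+∞`. -/
noncomputable def LB2 (s : ℕ) (δ w : ℝ) (x : ℕ → ℝ) : WithTop ℝ :=
  (δ : WithTop ℝ) +
    min ((x 1 : ℝ) : WithTop ℝ)
      (min ((max (x 2) (max ((w + δ) / (s : ℝ)) (x s + δ)) : ℝ) : WithTop ℝ)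
        ((Finset.Icc 2 (s ^ 2)).inf fun m =>
          ((max (x (m + 1)) ((w + (m : ℝ) * δ) / (s : ℝ)) : ℝ) : WithTop ℝ)))

def flipS {n s : ℕ} (S : Schedule n s) : Schedule n s :=
  fun h => (S h).map (fun c => (c.1.symm, c.2))

lemma flipS_load {n s : ℕ} (δ : ℝ) (S : Schedule n s) (h : Fin s) :
    load δ (flipS S) h = load δ S h := by
  unfold load flipS
  rw [List.map_map]
  rfl

lemma flipS_makespan {n s : ℕ} (δ : ℝ) (S : Schedule n s) :
    makespan δ (flipS S) = makespan δ S := by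
  unfold makespan
  exact congrArg _ (funext (flipS_load δ S))

lemma flipS_valid {n s : ℕ} (S : Schedule n s) (hval : ValidWeights S) :
    ValidWeights (flipS S) := by
  intro h c hc
  rw [flipS, List.mem_map] at hc
  obtain ⟨c', hc', rfl⟩ := hc
  exact hval h c' hc'

lemma flipS_served {n s : ℕ} (S : Schedule n s) (a b : Fin n) :
    servedWeight (flipS S) a b = servedWeight S b a := by
  unfold servedWeight flipS
  apply Finset.sum_congr rfl
  intro h _
  rw [List.filter_map, List.map_map]
  have hsnd : (Prod.snd ∘ fun c : Config n => ((Equiv.symm c.1 : Equiv.Perm (Fin n)), c.2))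
      = Prod.snd := rfl
  rw [hsnd]
  refine congrArg List.sum (congrArg (List.map Prod.snd) (List.filter_congr ?_))
  intro c _
  simp only [Function.comp]
  rw [decide_eq_decide]
  constructor
  · intro he
    rw [← he]
    simp
  · intro he
    rw [← he]
    simp


lemma closeLB2 (s : ℕ) (δ w : ℝ) (x : ℕ → ℝ) (M : ℝ)
    (H : (δ + x 1 ≤ M) ∨ (δ + max (x 2) (max ((w + δ) / (s:ℝ)) (x s + δ)) ≤ M) ∨
      (∃ m ∈ Finset.Icc 2 (s^2), δ + max (x (m+1)) ((w + (m:ℝ)*δ)/(s:ℝ)) ≤ M)) :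
    LB2 s δ w x ≤ (M : WithTop ℝ) := by
  unfold LB2
  rcases H with h | h | ⟨m, hm, h⟩
  · calc (δ : WithTop ℝ) + _ ≤ (δ : WithTop ℝ) + ((x 1 : ℝ) : WithTop ℝ) :=
        add_le_add le_rfl (min_le_left _ _)
      _ = ((δ + x 1 : ℝ) : WithTop ℝ) := (WithTop.coe_add _ _).symm
      _ ≤ (M : WithTop ℝ) := WithTop.coe_le_coe.2 h
  · calc (δ : WithTop ℝ) + _ ≤ (δ : WithTop ℝ) + ((_ : ℝ) : WithTop ℝ) :=
        add_le_add le_rfl ((min_le_right _ _).trans (min_le_left _ _))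
      _ = ((δ + max (x 2) (max ((w + δ) / (s:ℝ)) (x s + δ)) : ℝ) : WithTop ℝ) :=
        (WithTop.coe_add _ _).symm
      _ ≤ (M : WithTop ℝ) := WithTop.coe_le_coe.2 h
  · calc (δ : WithTop ℝ) + _ ≤ (δ : WithTop ℝ) + ((_ : ℝ) : WithTop ℝ) :=
        add_le_add le_rfl ((min_le_right _ _).trans ((min_le_right _ _).trans (Finset.inf_le (f := fun m => ((max (x (m + 1)) ((w + (m : ℝ) * δ) / (s : ℝ)) : ℝ) : WithTop ℝ)) hm)))
      _ = ((δ + max (x (m+1)) ((w + (m:ℝ)*δ)/(s:ℝ)) : ℝ) : WithTop ℝ) := (WithTop.coe_add _ _).symm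
      _ ≤ (M : WithTop ℝ) := WithTop.coe_le_coe.2 h


lemma listSumMapAdd {α : Type*} (δ : ℝ) (g : α → ℝ) (l : List α) :
    (l.map (fun c => δ + g c)).sum = δ * l.length + (l.map g).sum := by
  induction l with
  | nil => simp
  | cons a l ih => simp [ih]; ring

lemma listFilterSumLe {α β : Type*} [DecidableEq β] (l : List α) (f : α → β) (g : α → ℝ)
    (hg : ∀ c ∈ l, 0 ≤ g c) (J : Finset β) :
    ∑ j ∈ J, ((l.filter (fun c => decide (f c = j))).map g).sum ≤ (l.map g).sum := by
  induction l with
  | nil => simp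
  | cons a l ih =>
    have hg' : ∀ c ∈ l, 0 ≤ g c := fun c hc => hg c (List.mem_cons_of_mem _ hc)
    have step : ∀ j ∈ J, ((List.filter (fun c => decide (f c = j)) (a :: l)).map g).sum
        = ((List.filter (fun c => decide (f c = j)) l).map g).sum + if f a = j then g a else 0 := by
      intro j _
      by_cases h : f a = j <;> simp [List.filter_cons, h, add_comm]
    rw [Finset.sum_congr rfl step, Finset.sum_add_distrib, Finset.sum_ite_eq]
    have h1 : (if f a ∈ J then g a else 0) ≤ g a := by
      split
      · exact le_refl _
      · exact hg a List.mem_cons_self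
    rw [List.map_cons, List.sum_cons, add_comm (g a)]
    exact add_le_add (ih hg') h1

lemma listSumMapAdd' {α : Type*} (δ : ℝ) (l : List (α × ℝ)) :
    (l.map (fun c => δ + c.2)).sum = δ * l.length + (l.map Prod.snd).sum :=
  listSumMapAdd δ Prod.snd l

theorem core {n s : ℕ} (hs : 1 ≤ s)
    (D : Matrix (Fin n) (Fin n) ℝ) (hD : ∀ i j, 0 ≤ D i j)
    (δ : ℝ) (hδ : 0 < δ)
    (S : Schedule n s) (hval : ValidWeights S) (hcov : Covers D S)
    (x : ℕ → ℝ)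
    (hxpos : ∀ j, 1 ≤ j → j ≤ s → 0 < x j)
    (hxanti : ∀ j₁ j₂, 1 ≤ j₁ → j₁ ≤ j₂ → j₂ ≤ s → x j₂ ≤ x j₁)
    (hx0 : ∀ j, s < j → x j = 0)
    (w : ℝ) (hw : w = ∑ j ∈ Finset.range s, x (j + 1))
    (i : Fin n)
    (hmul : ((univ.filter fun j => D i j ≠ 0).val.map fun j => D i j)
          = (Multiset.range s).map fun l => x (l + 1)) :
    (δ + x 1 ≤ makespan δ S) ∨
    (δ + max (x 2) (max ((w + δ) / (s:ℝ)) (x s + δ)) ≤ makespan δ S) ∨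
    (∃ m ∈ Finset.Icc 2 (s^2), δ + max (x (m+1)) ((w + (m:ℝ)*δ)/(s:ℝ)) ≤ makespan δ S) := by
  classical
  set M := makespan δ S with hM
  set J : Finset (Fin n) := univ.filter (fun j => D i j ≠ 0) with hJ
  set cnt : Fin s → Fin n → ℕ :=
    fun h j => ((S h).filter (fun c => decide (c.1 i = j))).length with hcnt
  set wgt : Fin s → Fin n → ℝ :=
    fun h j => (((S h).filter (fun c => decide (c.1 i = j))).map Prod.snd).sum with hwgt
  set tc : Fin n → ℕ := fun j => ∑ h, cnt h j with htc
  set m : ℕ := ∑ j ∈ J, tc j with hm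
  have hs0 : (0:ℝ) < s := by positivity
  -- basic facts
  have hJcard : J.card = s := by
    have h := congrArg Multiset.card hmul
    simp only [Multiset.card_map, Multiset.card_range] at h
    exact h
  have hDpos : ∀ j ∈ J, 0 < D i j := by
    intro j hj
    rw [hJ, Finset.mem_filter] at hj
    exact lt_of_le_of_ne (hD i j) (Ne.symm hj.2)
  have hDxs : ∀ j ∈ J, x s ≤ D i j := by
    intro j hj
    have hmem : D i j ∈ J.val.map fun j => D i j := Multiset.mem_map_of_mem _ hj
    rw [hmul, Multiset.mem_map] at hmem
    obtain ⟨l, hl, hlx⟩ := hmem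
    rw [Multiset.mem_range] at hl
    rw [← hlx]
    exact hxanti (l+1) s (by omega) (by omega) le_rfl
  have hsumJ : ∑ j ∈ J, D i j = w := by
    rw [hw]
    show (Multiset.map (fun j => D i j) _).sum
      = (Multiset.map (fun l => x (l+1)) (Finset.range s).val).sum
    rw [hmul, Finset.range_val]
  have hwnn : 0 ≤ w := by
    rw [hw]
    exact Finset.sum_nonneg fun l hl =>
      le_of_lt (hxpos (l+1) (by omega) (by rw [Finset.mem_range] at hl; omega))
  have hwgtnn : ∀ h j, 0 ≤ wgt h j := by
    intro h j
    apply List.sum_nonneg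
    intro y hy
    rw [List.mem_map] at hy
    obtain ⟨c, hc, rfl⟩ := hy
    exact le_of_lt (hval h c (List.mem_of_mem_filter hc))
  have hwgt0 : ∀ h j, cnt h j = 0 → wgt h j = 0 := by
    intro h j hc
    rw [hwgt]
    rw [hcnt] at hc
    simp only at hc ⊢
    rw [List.length_eq_zero_iff] at hc
    rw [hc]
    simp
  have loadLB : ∀ h, ∑ j ∈ J, (δ * cnt h j + wgt h j) ≤ load δ S h := by
    intro h
    have heach : ∀ j ∈ J, δ * (cnt h j : ℝ) + wgt h j
        = (((S h).filter (fun c => decide (c.1 i = j))).map (fun c => δ + c.2)).sum := by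
      intro j _
      have e := listSumMapAdd' δ ((S h).filter (fun c : Config n => decide (c.1 i = j)))
      rw [e]
    rw [Finset.sum_congr rfl heach]
    have hg : ∀ c ∈ S h, 0 ≤ δ + c.2 := by
      intro c hc
      have := hval h c hc
      linarith
    exact listFilterSumLe (S h) (fun c => c.1 i) (fun c => δ + c.2) hg J
  have hloadM : ∀ h, load δ S h ≤ M := by
    intro h
    exact le_ciSup (Set.Finite.bddAbove (Set.finite_range _)) h
  have hserved : ∀ j, servedWeight S i j = ∑ h, wgt h j := fun j => rfl
  have hsM : δ * m + w ≤ s * M := by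
    have h1 : δ * m + w ≤ ∑ h, load δ S h := by
      have h2 : ∀ j ∈ J, δ * (tc j : ℝ) + D i j ≤ ∑ h, (δ * cnt h j + wgt h j) := by
        intro j hj
        rw [Finset.sum_add_distrib]
        have e1 : ∑ h, δ * (cnt h j : ℝ) = δ * (tc j : ℝ) := by
          rw [← Finset.mul_sum, htc]
          push_cast
          ring
        rw [e1]
        have := hcov i j
        rw [hserved j] at this
        linarith
      calc δ * m + w = ∑ j ∈ J, (δ * (tc j : ℝ) + D i j) := by
            rw [Finset.sum_add_distrib, ← Finset.mul_sum, hsumJ, hm]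
            push_cast
            ring
        _ ≤ ∑ j ∈ J, ∑ h, (δ * cnt h j + wgt h j) := Finset.sum_le_sum h2
        _ = ∑ h, ∑ j ∈ J, (δ * cnt h j + wgt h j) := Finset.sum_comm
        _ ≤ ∑ h, load δ S h := Finset.sum_le_sum fun h _ => loadLB h
    calc δ * m + w ≤ ∑ h, load δ S h := h1
      _ ≤ ∑ _h : Fin s, M := Finset.sum_le_sum fun h _ => hloadM h
      _ = s * M := by simp [mul_comm]
  have htc1 : ∀ j ∈ J, 1 ≤ tc j := by
    intro j hj
    by_contra hno
    have htc0 : tc j = 0 := by omega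
    rw [htc] at htc0
    simp only at htc0
    rw [Finset.sum_eq_zero_iff] at htc0
    have : servedWeight S i j = 0 := by
      rw [hserved]
      exact Finset.sum_eq_zero fun h _ => hwgt0 h j (htc0 h (mem_univ h))
    have := hcov i j
    have := hDpos j hj
    linarith [this]
  have hms : s ≤ m := by
    calc s = ∑ _j ∈ J, 1 := by rw [Finset.sum_const, hJcard]; simp
      _ ≤ m := Finset.sum_le_sum fun j hj => htc1 j hj
  have hMδ : δ ≤ M := by
    have : (s:ℝ) ≤ (m:ℝ) := Nat.cast_le.2 hms
    nlinarith
  have single : ∀ j ∈ J, tc j = 1 → δ + D i j ≤ M := by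
    intro j hj htcj
    have hex : ∃ h₀, cnt h₀ j ≠ 0 := by
      by_contra hno
      push_neg at hno
      have : tc j = 0 := by
        rw [htc]; exact Finset.sum_eq_zero fun h _ => hno h
      omega
    obtain ⟨h₀, hh₀⟩ := hex
    have hothers : ∀ h, h ≠ h₀ → cnt h j = 0 := by
      intro h hne
      have e : cnt h₀ j + ∑ h' ∈ univ.erase h₀, cnt h' j = ∑ h', cnt h' j :=
        Finset.add_sum_erase univ (fun h => cnt h j) (mem_univ h₀)
      have htcj' : ∑ h', cnt h' j = 1 := htcj
      have h0 : ∑ h' ∈ univ.erase h₀, cnt h' j = 0 := by omega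
      rw [Finset.sum_eq_zero_iff] at h0
      exact h0 h (Finset.mem_erase.2 ⟨hne, mem_univ h⟩)
    have hsw : servedWeight S i j = wgt h₀ j := by
      rw [hserved]
      exact Finset.sum_eq_single h₀ (fun h _ hne => hwgt0 h j (hothers h hne))
        (fun hh => absurd (mem_univ h₀) hh)
    have hDle : D i j ≤ wgt h₀ j := by
      have := hcov i j
      rw [hsw] at this
      exact this
    have hload : δ * (cnt h₀ j : ℝ) + wgt h₀ j ≤ load δ S h₀ := by
      refine le_trans ?_ (loadLB h₀)
      refine Finset.single_le_sum (f := fun j' => δ * (cnt h₀ j' : ℝ) + wgt h₀ j') ?_ hj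
      intro j' _
      have := hwgtnn h₀ j'
      positivity
    have hc1 : (1:ℝ) ≤ (cnt h₀ j : ℝ) := by
      have : 1 ≤ cnt h₀ j := by omega
      exact_mod_cast this
    have := hloadM h₀
    nlinarith
  have card_ge : ∀ k : ℕ, k + 1 ≤ s → k + 1 ≤ (J.filter (fun j => x (k+1) ≤ D i j)).card := by
    intro k hks
    have h1 : ((J.filter (fun j => x (k+1) ≤ D i j)).card : ℕ)
        = Multiset.card ((J.val.map fun j => D i j).filter (fun y => x (k+1) ≤ y)) := by
      rw [Multiset.filter_map]
      simp [Finset.card, Finset.filter_val, Function.comp]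
    rw [h1, hmul, Multiset.filter_map]
    simp only [Multiset.card_map]
    have h2 : Multiset.card ((Multiset.range s).filter ((fun y => x (k+1) ≤ y) ∘ fun l => x (l+1)))
        = ((Finset.range s).filter (fun l => x (k+1) ≤ x (l+1))).card := by
      simp [Finset.card, Finset.filter_val, Finset.range_val, Function.comp]
    rw [h2]
    have h3 : Finset.range (k+1) ⊆ (Finset.range s).filter (fun l => x (k+1) ≤ x (l+1)) := by
      intro l hl
      rw [Finset.mem_range] at hl
      rw [Finset.mem_filter, Finset.mem_range]
      exact ⟨by omega, hxanti (l+1) (k+1) (by omega) (by omega) hks⟩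
    calc k + 1 = (Finset.range (k+1)).card := by simp
      _ ≤ _ := Finset.card_le_card h3
  have card_multi : (J.filter (fun j => 2 ≤ tc j)).card + s ≤ m := by
    have h1 : ∀ j ∈ J, 1 + (if 2 ≤ tc j then 1 else 0) ≤ tc j := by
      intro j hj
      have := htc1 j hj
      split <;> omega
    calc (J.filter (fun j => 2 ≤ tc j)).card + s
        = ∑ j ∈ J, (1 + if 2 ≤ tc j then 1 else 0) := by
          rw [Finset.sum_add_distrib, Finset.sum_const, hJcard, ← Finset.sum_filter]
          simp [add_comm]
      _ ≤ ∑ j ∈ J, tc j := Finset.sum_le_sum h1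
      _ = m := hm.symm
  have exists_single_big : ∀ k : ℕ, k + 1 ≤ s →
      (J.filter (fun j => 2 ≤ tc j)).card < k + 1 → δ + x (k+1) ≤ M := by
    intro k hks hcard
    have h2 := card_ge k hks
    have hne : ¬ (J.filter (fun j => x (k+1) ≤ D i j) ⊆ J.filter (fun j => 2 ≤ tc j)) := by
      intro hsub
      exact absurd (Finset.card_le_card hsub) (by omega)
    rw [Finset.not_subset] at hne
    obtain ⟨j, hj1, hj2⟩ := hne
    rw [Finset.mem_filter] at hj1
    have hjJ := hj1.1
    have htcj : tc j = 1 := by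
      have := htc1 j hjJ
      by_contra hne2
      exact hj2 (Finset.mem_filter.2 ⟨hjJ, by omega⟩)
    calc δ + x (k+1) ≤ δ + D i j := by linarith [hj1.2]
      _ ≤ M := single j hjJ htcj
  -- main case analysis
  rcases Nat.lt_trichotomy m (s+1) with hcase | hcase | hcase
  · -- m = s
    left
    have hc0 : (J.filter (fun j => 2 ≤ tc j)).card < 0 + 1 := by omega
    have := exists_single_big 0 (by omega) hc0
    simpa using this
  · -- m = s + 1
    right; left
    have hmc : (m:ℝ) = (s:ℝ) + 1 := by rw [hcase]; push_cast; ring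
    have hB : (w + δ) / (s:ℝ) ≤ M - δ := by
      rw [div_le_iff₀ hs0]
      nlinarith [hsM]
    have hA : δ + x 2 ≤ M := by
      by_cases h1 : s = 1
      · have hx2 : x 2 = 0 := hx0 2 (by omega)
        rw [hx2]
        linarith
      · have := exists_single_big 1 (by omega) (by omega)
        simpa using this
    have hC : 2*δ + x s ≤ M := by
      have hex : ∃ h₀ : Fin s, 2 ≤ ∑ j ∈ J, cnt h₀ j := by
        by_contra hno
        push_neg at hno
        have hcomm : ∑ h, ∑ j ∈ J, cnt h j = m := by
          rw [Finset.sum_comm]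
        have hle : m ≤ ∑ _h : Fin s, 1 := by
          rw [← hcomm]
          exact Finset.sum_le_sum (fun h _ => by have := hno h; omega)
        simp at hle
        omega
      obtain ⟨h₀, hh₀⟩ := hex
      have key : ∃ j₀ ∈ J, 1 ≤ cnt h₀ j₀ ∧ ∀ h, h ≠ h₀ → cnt h j₀ = 0 := by
        by_cases hA2 : ∃ j ∈ J, 1 ≤ cnt h₀ j ∧ tc j = 1
        · obtain ⟨j₀, hj₀, hc1, ht1⟩ := hA2
          refine ⟨j₀, hj₀, hc1, ?_⟩
          intro h hne
          have e : cnt h₀ j₀ + ∑ h' ∈ univ.erase h₀, cnt h' j₀ = ∑ h', cnt h' j₀ :=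
            Finset.add_sum_erase univ (fun h => cnt h j₀) (mem_univ h₀)
          have ht1' : ∑ h', cnt h' j₀ = 1 := ht1
          have h0 : ∑ h' ∈ univ.erase h₀, cnt h' j₀ = 0 := by omega
          rw [Finset.sum_eq_zero_iff] at h0
          exact h0 h (Finset.mem_erase.2 ⟨hne, mem_univ h⟩)
        · push_neg at hA2
          have hsub : J.filter (fun j => 1 ≤ cnt h₀ j) ⊆ J.filter (fun j => 2 ≤ tc j) := by
            intro j hjf
            rw [Finset.mem_filter] at hjf ⊢
            have h2 := hA2 j hjf.1 hjf.2
            have h3 := htc1 j hjf.1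
            exact ⟨hjf.1, by omega⟩
          have hcard1 : (J.filter (fun j => 1 ≤ cnt h₀ j)).card ≤ 1 := by
            have := Finset.card_le_card hsub
            omega
          have hsumf : ∑ j ∈ J.filter (fun j => 1 ≤ cnt h₀ j), cnt h₀ j = ∑ j ∈ J, cnt h₀ j := by
            apply Finset.sum_filter_of_ne
            intro j _ hne
            omega
          have hne2 : (J.filter (fun j => 1 ≤ cnt h₀ j)).Nonempty := by
            by_contra hemp
            rw [Finset.not_nonempty_iff_eq_empty] at hemp
            rw [hemp] at hsumf
            simp at hsumf
            omega
          obtain ⟨j₀, hj₀f⟩ := hne2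
          have hsingle : J.filter (fun j => 1 ≤ cnt h₀ j) = {j₀} := by
            apply Finset.eq_singleton_iff_unique_mem.2
            refine ⟨hj₀f, ?_⟩
            intro y hy
            by_contra hyne
            have hsub2 : ({y, j₀} : Finset (Fin n)) ⊆ J.filter (fun j => 1 ≤ cnt h₀ j) := by
              intro z hz
              rw [Finset.mem_insert, Finset.mem_singleton] at hz
              rcases hz with rfl | rfl
              · exact hy
              · exact hj₀f
            have hcard2 := Finset.card_le_card hsub2
            rw [Finset.card_insert_of_notMem (by simpa using hyne),
              Finset.card_singleton] at hcard2
            omega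
          rw [Finset.mem_filter] at hj₀f
          have hcnt2 : 2 ≤ cnt h₀ j₀ := by
            rw [hsingle] at hsumf
            simp at hsumf
            omega
          have etc : tc j₀ + ∑ j ∈ J.erase j₀, tc j = ∑ j ∈ J, tc j :=
            Finset.add_sum_erase J tc hj₀f.1
          have herase : (s - 1 : ℕ) ≤ ∑ j ∈ J.erase j₀, tc j := by
            calc (s-1:ℕ) = (J.erase j₀).card := by
                  rw [Finset.card_erase_of_mem hj₀f.1, hJcard]
              _ = ∑ _j ∈ J.erase j₀, 1 := by simp
              _ ≤ _ := Finset.sum_le_sum (fun j hj => htc1 j (Finset.mem_of_mem_erase hj))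
          have hmm : ∑ j ∈ J, tc j = m := hm.symm
          have htcub : tc j₀ ≤ 2 := by omega
          have e2 : cnt h₀ j₀ + ∑ h' ∈ univ.erase h₀, cnt h' j₀ = ∑ h', cnt h' j₀ :=
            Finset.add_sum_erase univ (fun h => cnt h j₀) (mem_univ h₀)
          have htcdef : ∑ h', cnt h' j₀ = tc j₀ := rfl
          have h0 : ∑ h' ∈ univ.erase h₀, cnt h' j₀ = 0 := by omega
          rw [Finset.sum_eq_zero_iff] at h0
          exact ⟨j₀, hj₀f.1, by omega, fun h hne => h0 h (Finset.mem_erase.2 ⟨hne, mem_univ h⟩)⟩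
      obtain ⟨j₀, hj₀J, hc1, hoth⟩ := key
      have hsw : servedWeight S i j₀ = wgt h₀ j₀ := by
        rw [hserved]
        exact Finset.sum_eq_single h₀ (fun h _ hne => hwgt0 h j₀ (hoth h hne))
          (fun hh => absurd (mem_univ h₀) hh)
      have hDle : D i j₀ ≤ wgt h₀ j₀ := by
        have := hcov i j₀
        rw [hsw] at this
        exact this
      have hsplit : δ * ((∑ j ∈ J, cnt h₀ j : ℕ) : ℝ) + wgt h₀ j₀
          ≤ ∑ j ∈ J, (δ * cnt h₀ j + wgt h₀ j) := by
        rw [Finset.sum_add_distrib]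
        have e1 : ∑ j ∈ J, δ * (cnt h₀ j:ℝ) = δ * ((∑ j ∈ J, cnt h₀ j : ℕ):ℝ) := by
          rw [← Finset.mul_sum]
          push_cast
          ring
        rw [e1]
        have := Finset.single_le_sum (f := fun j => wgt h₀ j) (fun j _ => hwgtnn h₀ j) hj₀J
        linarith
      have hc2 : (2:ℝ) ≤ ((∑ j ∈ J, cnt h₀ j : ℕ):ℝ) := by exact_mod_cast hh₀
      have hδ2 : δ * 2 ≤ δ * ((∑ j ∈ J, cnt h₀ j : ℕ):ℝ) :=
        mul_le_mul_of_nonneg_left hc2 hδ.le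
      have hL := loadLB h₀
      have hLM := hloadM h₀
      have hxs := hDxs j₀ hj₀J
      linarith
    have hmax : max (x 2) (max ((w + δ) / (s:ℝ)) (x s + δ)) ≤ M - δ := by
      apply max_le
      · linarith
      · apply max_le
        · linarith
        · linarith
    linarith
  · -- m ≥ s + 2
    by_cases h1 : s = 1
    · right; left
      subst h1
      have hx2 : x 2 = 0 := hx0 2 (by omega)
      have hwx : w = x 1 := by rw [hw]; simp
      have hm3 : (3:ℝ) ≤ (m:ℝ) := by exact_mod_cast (by omega : 3 ≤ m)
      have hδ3 : δ * 3 ≤ δ * (m:ℝ) := mul_le_mul_of_nonneg_left hm3 hδ.le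
      have hs1 : ((1:ℕ):ℝ) = (1:ℝ) := Nat.cast_one
      rw [hs1] at hsM ⊢
      have hmax : max (x 2) (max ((w + δ) / (1:ℝ)) (x 1 + δ)) ≤ M - δ := by
        apply max_le
        · rw [hx2]; linarith
        · apply max_le
          · rw [div_one]; linarith
          · rw [← hwx]; linarith
      linarith
    · right; right
      have hk2 : 2 ≤ m - s := by omega
      have hss : s ≤ s^2 := Nat.le_self_pow (by omega) s
      have hs4 : 4 ≤ s^2 := by
        have := Nat.pow_le_pow_left (show 2 ≤ s by omega) 2
        simpa using this
      refine ⟨min (m - s) (s^2), ?_, ?_⟩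
      · rw [Finset.mem_Icc]
        exact ⟨by omega, min_le_right _ _⟩
      · have hdiv : (w + ((min (m - s) (s^2) : ℕ) : ℝ)*δ)/(s:ℝ) ≤ M - δ := by
          rw [div_le_iff₀ hs0]
          have hcast : (s:ℝ) + ((min (m - s) (s^2) : ℕ):ℝ) ≤ (m:ℝ) := by
            exact_mod_cast Nat.cast_le.2 (show s + min (m - s) (s^2) ≤ m by omega)
          have hmul2 : δ * ((s:ℝ) + ((min (m - s) (s^2) : ℕ):ℝ)) ≤ δ * (m:ℝ) :=
            mul_le_mul_of_nonneg_left hcast hδ.le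
          nlinarith [hsM]
        have hxle : x (min (m - s) (s^2) + 1) ≤ M - δ := by
          by_cases h2 : min (m - s) (s^2) + 1 ≤ s
          · have hm'k : min (m - s) (s^2) = m - s := by omega
            have := exists_single_big (min (m - s) (s^2)) h2 (by omega)
            linarith
          · have hz : x (min (m - s) (s^2) + 1) = 0 := hx0 _ (by omega)
            rw [hz]
            linarith
        have hmax : max (x (min (m - s) (s^2) + 1))
            ((w + ((min (m - s) (s^2) : ℕ):ℝ)*δ)/(s:ℝ)) ≤ M - δ := max_le hxle hdiv
        linarith


/-- **Lower bound 2.** If some row or some column of `D` has exactly `s`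
nonzero entries, whose values in non-increasing order are
`x 1 ≥ x 2 ≥ ⋯ ≥ x s > 0` with total weight `w` (and `x j = 0` for `j > s`),
then the makespan of any covering schedule over `s` parallel switches with
reconfiguration delay `δ > 0` is at least `LB2 s δ w x`. -/
theorem lower_bound_two {n s : ℕ} (hs : 1 ≤ s)
    (D : Matrix (Fin n) (Fin n) ℝ) (hD : ∀ i j, 0 ≤ D i j)
    (δ : ℝ) (hδ : 0 < δ)
    (S : Schedule n s) (hval : ValidWeights S) (hcov : Covers D S)
    (x : ℕ → ℝ)
    (hxpos : ∀ j, 1 ≤ j → j ≤ s → 0 < x j)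
    (hxanti : ∀ j₁ j₂, 1 ≤ j₁ → j₁ ≤ j₂ → j₂ ≤ s → x j₂ ≤ x j₁)
    (hx0 : ∀ j, s < j → x j = 0)
    (w : ℝ) (hw : w = ∑ j ∈ Finset.range s, x (j + 1))
    (hrc :
      (∃ i, ((univ.filter fun j => D i j ≠ 0).val.map fun j => D i j)
          = (Multiset.range s).map fun l => x (l + 1)) ∨
      (∃ j, ((univ.filter fun i => D i j ≠ 0).val.map fun i => D i j)
          = (Multiset.range s).map fun l => x (l + 1))) :
    LB2 s δ w x ≤ ((makespan δ S : ℝ) : WithTop ℝ) := by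
  rcases hrc with ⟨i, hi⟩ | ⟨j, hj⟩
  · exact closeLB2 s δ w x _ (core hs D hD δ hδ S hval hcov x hxpos hxanti hx0 w hw i hi)
  · rw [← flipS_makespan δ S]
    refine closeLB2 s δ w x _ (core hs D.transpose (fun a b => hD b a) δ hδ (flipS S)
      (flipS_valid S hval) ?_ x hxpos hxanti hx0 w hw j ?_)
    · intro a b
      rw [flipS_served]
      exact hcov b a
    · exact hj
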